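/- Let A be a finite alphabet with a map to a group G whose image generates G as a semigroup, let L ⊆ A* be accepted by a finite automaton with n states, and suppose every element of G has only finitely many representatives in L. Let k ≥ 0, let B be the number of elements of G at word-metric distance at most k from the identity, and suppose w₂ ∈ A* lies in L and t, t' are integers with t < t' ≤ |w₂| such that the subpath of w₂ from time t to time t' stays within word-metric distance k of a fixed group element. If this subpath visits some group element more than n times with the automaton in the same state at two of those visits having equal group-element value, then L contains infinitely many representatives of π(w₂); consequently, for any w₂ ∈ L the length of any subsegment of w₂ whose path stays in a ball of radius k is less than n·B. -/
import Mathlib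


/-- The evaluation of a word over the alphabet `A` in the group `G`, via the letter map `φ`;
this is the monoid homomorphism `π : A* → G`. -/
def evalWord {A G : Type*} [Group G] (φ : A → G) (w : List A) : G := (w.map φ).prod

/-- The word metric on `G` relative to the letter map `φ : A → G`:
`d(g,h)` is the least length of a word `u` with `π(u) = g⁻¹h`. -/
noncomputable def wordDist {A G : Type*} [Group G] (φ : A → G) (g h : G) : ℕ :=
  sInf {n | ∃ u : List A, u.length = n ∧ evalWord φ u = g⁻¹ * h}

/-- The synchronous uniform distance between two words: the maximum over `n` of the
word-metric distance between the values of the length-`n` prefixes. -/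
noncomputable def unifDist {A G : Type*} [Group G] (φ : A → G) (w₁ w₂ : List A) : ℕ :=
  sSup {m | ∃ n : ℕ, m = wordDist φ (evalWord φ (w₁.take n)) (evalWord φ (w₂.take n))}

/-- The formal inverse of a word: reverse it and invert each letter via `ι`. -/
def wordInv {A : Type*} (ι : A → A) (w : List A) : List A := w.reverse.map ι

/-- `(A, L)` is an automatic structure for the group `G` (with letter map `φ`):
`L` is regular, maps onto `G`, and satisfies the one-sided fellow traveller property. -/
def IsAutomaticStructure {A G : Type*} [Group G] (φ : A → G) (L : Language A) : Prop :=
  L.IsRegular ∧ (∀ g : G, ∃ w ∈ L, evalWord φ w = g) ∧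
    ∃ k : ℕ, ∀ w₁ ∈ L, ∀ w₂ ∈ L, ∀ a : Option A,
      evalWord φ (w₁ ++ a.toList) = evalWord φ w₂ →
        unifDist φ (w₁ ++ a.toList) w₂ ≤ k

/-- `(A, L)` is a biautomatic structure: both `(A, L)` and `(A, L⁻¹)` are automatic. -/
def IsBiautomaticStructure {A G : Type*} [Group G] (φ : A → G) (ι : A → A)
    (L : Language A) : Prop :=
  IsAutomaticStructure φ L ∧
    IsAutomaticStructure φ ((wordInv ι '' (L : Set (List A)) : Set (List A)) : Language A)

lemma evalWord_append {A G : Type*} [Group G] (φ : A → G) (u v : List A) :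
    evalWord φ (u ++ v) = evalWord φ u * evalWord φ v := by
  simp [evalWord]

lemma exists_repr {A G : Type*} [Group G] (φ : A → G)
    (hgen : Subsemigroup.closure (Set.range φ) = ⊤) (g : G) :
    ∃ u : List A, evalWord φ u = g := by
  have hg : g ∈ Subsemigroup.closure (Set.range φ) := by rw [hgen]; trivial
  induction hg using Subsemigroup.closure_induction with
  | mem x hx => obtain ⟨a, ha⟩ := hx; exact ⟨[a], by simp [evalWord, ha]⟩
  | mul x y hx hy ihx ihy =>
      obtain ⟨u, hu⟩ := ihx; obtain ⟨v, hv⟩ := ihy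
      exact ⟨u ++ v, by rw [evalWord_append, hu, hv]⟩

lemma part_i {A G σ : Type*} [Group G] (φ : A → G)
    (M : DFA A σ) (L : Language A) (hL : M.accepts = L)
    (w₂ : List A) (hw₂ : w₂ ∈ L) (t₁ t₂ : ℕ) (h12 : t₁ < t₂) (h2 : t₂ ≤ w₂.length)
    (heq : evalWord φ (w₂.take t₁) = evalWord φ (w₂.take t₂))
    (hst : M.eval (w₂.take t₁) = M.eval (w₂.take t₂)) :
    {w : List A | w ∈ L ∧ evalWord φ w = evalWord φ w₂}.Infinite := by
  set x := w₂.take t₁ with hx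
  set y := (w₂.take t₂).drop t₁ with hy
  set z := w₂.drop t₂ with hz
  have hxy : x ++ y = w₂.take t₂ := by
    have h : (w₂.take t₂).take t₁ = x := by
      rw [hx, List.take_take, min_eq_left h12.le]
    rw [← h, hy]; exact List.take_append_drop _ _
  have hw : (x ++ y) ++ z = w₂ := by rw [hxy, hz]; exact List.take_append_drop _ _
  have hylen : y.length = t₂ - t₁ := by
    rw [hy, List.length_drop, List.length_take, min_eq_left h2]
  have hypos : 0 < y.length := by omega
  have hy1 : evalWord φ y = 1 := by
    have h := congrArg (evalWord φ) hxy
    rw [evalWord_append] at h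
    have h' : evalWord φ x * evalWord φ y = evalWord φ x * 1 := by
      rw [mul_one, h, ← heq]
    exact mul_left_cancel h'
  have hst' : M.eval (x ++ y) = M.eval x := by rw [hxy, ← hst]
  have evapp : ∀ u v : List A, M.eval (u ++ v) = M.evalFrom (M.eval u) v :=
    fun u v => M.evalFrom_of_append M.start u v
  set rep : ℕ → List A := fun m => (List.replicate m y).flatten with hrep
  have repsucc : ∀ m, rep (m + 1) = y ++ rep m := by
    intro m; simp [hrep, List.replicate_succ]
  have replen : ∀ m, (rep m).length = m * y.length := by
    intro m; induction m with
    | zero => simp [hrep]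
    | succ m ih => rw [repsucc, List.length_append, ih]; ring
  have repeval : ∀ m, evalWord φ (rep m) = 1 := by
    intro m; induction m with
    | zero => simp [hrep, evalWord]
    | succ m ih => rw [repsucc, evalWord_append, ih, hy1, one_mul]
  have repstate : ∀ m, M.eval (x ++ rep m) = M.eval x := by
    intro m; induction m with
    | zero => simp [hrep]
    | succ m ih =>
      have h : x ++ rep (m + 1) = (x ++ y) ++ rep m := by
        rw [repsucc, List.append_assoc]
      rw [h, evapp, hst', ← evapp, ih]
  set f : ℕ → List A := fun m => x ++ (rep m ++ z) with hf
  have hmem : ∀ m, f m ∈ {w : List A | w ∈ L ∧ evalWord φ w = evalWord φ w₂} := by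
    intro m
    constructor
    · rw [← hL, DFA.mem_accepts]
      have hev : M.eval (f m) = M.eval w₂ := by
        rw [← hw, hf]
        show M.eval (x ++ (rep m ++ z)) = M.eval ((x ++ y) ++ z)
        rw [← List.append_assoc, evapp, repstate, ← hst', ← evapp]
      rw [hev, ← DFA.mem_accepts, hL]; exact hw₂
    · show evalWord φ (f m) = evalWord φ w₂
      rw [← hw, hf]
      simp only [evalWord_append, repeval, hy1, one_mul, mul_one]
  have hinj : Function.Injective f := by
    intro m₁ m₂ h
    have hlen := congrArg List.length h
    simp only [hf, List.length_append, replen] at hlen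
    have h2 : m₁ * y.length = m₂ * y.length := by omega
    exact Nat.eq_of_mul_eq_mul_right hypos h2
  exact Set.infinite_of_injective_forall_mem hinj hmem

/-- Pumping argument inside a ball. Let `L` be accepted by a DFA `M` with `n` states and
suppose every element of `G` has only finitely many representatives in `L`.  Let `B` be the
number of group elements at word-metric distance at most `k` from the identity.
(i) If `w₂ ∈ L` and the subpath of `w₂` between times `t` and `t'` stays within distance `k`
of a fixed group element `g₀`, and there are two times in `[t, t']` at which the path visits
the same group element with the automaton in the same state, then `L` contains infinitely
many representatives of `π(w₂)`.
(ii) Consequently, for any `w₂ ∈ L`, any subsegment of `w₂` whose path stays in a ball of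
radius `k` has length less than `n·B`. -/
theorem pumping_in_ball {A G : Type*} [Fintype A] [Group G] (φ : A → G)
    (hgen : Subsemigroup.closure (Set.range φ) = ⊤)
    {σ : Type*} [Fintype σ] (M : DFA A σ) (n : ℕ) (hn : Fintype.card σ = n)
    (L : Language A) (hL : M.accepts = L)
    (hfin : ∀ g : G, {w : List A | w ∈ L ∧ evalWord φ w = g}.Finite)
    (k : ℕ) (B : ℕ) (hB : B = Set.ncard {g : G | wordDist φ 1 g ≤ k}) :
    (∀ w₂ ∈ L, ∀ g₀ : G, ∀ t t' : ℕ, t < t' → t' ≤ w₂.length →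
      (∀ s : ℕ, t ≤ s → s ≤ t' → wordDist φ g₀ (evalWord φ (w₂.take s)) ≤ k) →
      (∃ t₁ t₂ : ℕ, t ≤ t₁ ∧ t₁ < t₂ ∧ t₂ ≤ t' ∧
        evalWord φ (w₂.take t₁) = evalWord φ (w₂.take t₂) ∧
        M.eval (w₂.take t₁) = M.eval (w₂.take t₂)) →
      {w : List A | w ∈ L ∧ evalWord φ w = evalWord φ w₂}.Infinite) ∧
    (∀ w₂ ∈ L, ∀ g₀ : G, ∀ t t' : ℕ, t < t' → t' ≤ w₂.length →
      (∀ s : ℕ, t ≤ s → s ≤ t' → wordDist φ g₀ (evalWord φ (w₂.take s)) ≤ k) →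
      t' - t < n * B) := by
  have key : ∀ w₂ ∈ L, ∀ g₀ : G, ∀ t t' : ℕ, t < t' → t' ≤ w₂.length →
      (∀ s : ℕ, t ≤ s → s ≤ t' → wordDist φ g₀ (evalWord φ (w₂.take s)) ≤ k) →
      (∃ t₁ t₂ : ℕ, t ≤ t₁ ∧ t₁ < t₂ ∧ t₂ ≤ t' ∧
        evalWord φ (w₂.take t₁) = evalWord φ (w₂.take t₂) ∧
        M.eval (w₂.take t₁) = M.eval (w₂.take t₂)) →
      {w : List A | w ∈ L ∧ evalWord φ w = evalWord φ w₂}.Infinite := by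
    rintro w₂ hw₂ g₀ t t' htt' ht'len hball ⟨t₁, t₂, ht1, h12, ht2, heq, hst⟩
    exact part_i φ M L hL w₂ hw₂ t₁ t₂ h12 (ht2.trans ht'len) heq hst
  refine ⟨key, ?_⟩
  intro w₂ hw₂ g₀ t t' htt' ht'len hball
  by_contra hcon
  push_neg at hcon
  -- the ball is finite
  have hsub : {g : G | wordDist φ 1 g ≤ k} ⊆ evalWord φ '' {u : List A | u.length ≤ k} := by
    intro g hg
    have hne : {m | ∃ u : List A, u.length = m ∧ evalWord φ u = 1⁻¹ * g}.Nonempty := by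
      obtain ⟨u, hu⟩ := exists_repr φ hgen g
      exact ⟨u.length, u, rfl, by simp [hu]⟩
    obtain ⟨u, hlen, hval⟩ := Nat.sInf_mem hne
    exact ⟨u, by rw [Set.mem_setOf_eq, hlen]; exact hg, by simpa using hval⟩
  have hSfin : {g : G | wordDist φ 1 g ≤ k}.Finite :=
    (Set.Finite.image _ (List.finite_length_le A k)).subset hsub
  have hScard : hSfin.toFinset.card = B := by
    rw [hB, Set.ncard_eq_toFinset_card _ hSfin]
  -- pigeonhole over [t, t']
  set F : ℕ → G × σ := fun s => (g₀⁻¹ * evalWord φ (w₂.take s), M.eval (w₂.take s)) with hF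
  have hmaps : ∀ s ∈ Finset.Icc t t', F s ∈ hSfin.toFinset ×ˢ Finset.univ := by
    intro s hs
    rw [Finset.mem_Icc] at hs
    rw [Finset.mem_product]
    refine ⟨?_, Finset.mem_univ _⟩
    rw [Set.Finite.mem_toFinset, Set.mem_setOf_eq]
    have hd : wordDist φ 1 (g₀⁻¹ * evalWord φ (w₂.take s))
        = wordDist φ g₀ (evalWord φ (w₂.take s)) := by
      simp [wordDist]
    rw [hd]
    exact hball s hs.1 hs.2
  have hcard : (hSfin.toFinset ×ˢ (Finset.univ : Finset σ)).card < (Finset.Icc t t').card := by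
    rw [Finset.card_product, Finset.card_univ, hn, hScard, Nat.card_Icc]
    calc B * n = n * B := Nat.mul_comm _ _
      _ ≤ t' - t := hcon
      _ < t' + 1 - t := by omega
  obtain ⟨s₁, hs₁, s₂, hs₂, hne12, hFeq⟩ :=
    Finset.exists_ne_map_eq_of_card_lt_of_maps_to hcard hmaps
  rw [Finset.mem_Icc] at hs₁ hs₂
  have hFeq' : evalWord φ (w₂.take s₁) = evalWord φ (w₂.take s₂) ∧
      M.eval (w₂.take s₁) = M.eval (w₂.take s₂) := by
    have h1 := congrArg Prod.fst hFeq
    have h2 := congrArg Prod.snd hFeq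
    simp only [hF] at h1 h2
    exact ⟨mul_left_cancel h1, h2⟩
  have hinf : {w : List A | w ∈ L ∧ evalWord φ w = evalWord φ w₂}.Infinite := by
    rcases lt_or_gt_of_ne hne12 with h | h
    · exact key w₂ hw₂ g₀ t t' htt' ht'len hball
        ⟨s₁, s₂, hs₁.1, h, hs₂.2, hFeq'.1, hFeq'.2⟩
    · exact key w₂ hw₂ g₀ t t' htt' ht'len hball
        ⟨s₂, s₁, hs₂.1, h, hs₁.2, hFeq'.1.symm, hFeq'.2.symm⟩
  exact hinf (hfin (evalWord φ w₂))
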